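/- Let 𝕏 be a compact metric space. If η is a probability measure, i.e. η(𝕏)=1, then τ(K)≤η(K) for every closed set K⊆𝕏. -/

import Mathlib

open MeasureTheory Filter Set Topology
open scoped ENNReal

/-- A finitely additive outer probability on `X`: a monotone, finitely subadditive set
function defined on all subsets of `X`, with values in `[0,1]` and total mass `1`. -/
structure FinAddOuterProb (X : Type*) where
  toFun : Set X → ℝ≥0∞
  mono' : ∀ ⦃A B : Set X⦄, A ⊆ B → toFun A ≤ toFun B
  subadd' : ∀ A B : Set X, toFun (A ∪ B) ≤ toFun A + toFun B
  le_one' : ∀ A : Set X, toFun A ≤ 1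
  univ_eq' : toFun Set.univ = 1

/-- The premeasure `τ(A) = limsup_n (1/n) ∑_{j<n} ξ_j(A)`. -/
noncomputable def tauSeq {X : Type*} (ξ : ℕ → FinAddOuterProb X) (A : Set X) : ℝ≥0∞ :=
  Filter.atTop.limsup fun n : ℕ => (∑ j ∈ Finset.range n, (ξ j).toFun A) / (n : ℝ≥0∞)

/-- `ν_r(Y)`: infimum of `∑_i τ(I_i)` over countable covers of `Y` by open sets of
diameter at most `r`. -/
noncomputable def nuSeqAux {X : Type*} [MetricSpace X] (ξ : ℕ → FinAddOuterProb X) (r : ℝ)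
    (Y : Set X) : ℝ≥0∞ :=
  ⨅ (I : ℕ → Set X) (_ : Y ⊆ ⋃ n, I n) (_ : ∀ n, IsOpen (I n))
    (_ : ∀ n, EMetric.diam (I n) ≤ ENNReal.ofReal r), ∑' n, tauSeq ξ (I n)

/-- `ν(Y) = sup_{r>0} ν_r(Y)`, the Carathéodory Method II construction from `τ`. -/
noncomputable def nuSeq {X : Type*} [MetricSpace X] (ξ : ℕ → FinAddOuterProb X)
    (Y : Set X) : ℝ≥0∞ :=
  ⨆ (r : ℝ) (_ : 0 < r), nuSeqAux ξ r Y

lemma tauSeq_mono {X : Type*} (ξ : ℕ → FinAddOuterProb X) {A B : Set X} (h : A ⊆ B) :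
    tauSeq ξ A ≤ tauSeq ξ B := by
  refine Filter.limsup_le_limsup (Eventually.of_forall fun n => ?_)
  exact ENNReal.div_le_div_right
    (Finset.sum_le_sum fun j _ => (ξ j).mono' h) _

lemma limsup_add_le_atTop (u v : ℕ → ℝ≥0∞) :
    Filter.atTop.limsup (fun n => u n + v n) ≤
      Filter.atTop.limsup u + Filter.atTop.limsup v := by
  set a := Filter.atTop.limsup u with ha
  set b := Filter.atTop.limsup v with hb
  rcases eq_top_or_lt_top a with hA | hA
  · simp [hA]
  rcases eq_top_or_lt_top b with hB | hB
  · simp [hB]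
  refine ENNReal.le_of_forall_pos_le_add fun ε hε hfin => ?_
  have hε2 : (0 : ℝ≥0∞) < (ε : ℝ≥0∞) / 2 := by
    simp [ENNReal.div_pos_iff, hε.ne']
  have hu : ∀ᶠ n in Filter.atTop, u n < a + ε / 2 :=
    Filter.eventually_lt_of_limsup_lt (by
      rw [← ha]; exact ENNReal.lt_add_right hA.ne hε2.ne')
  have hv : ∀ᶠ n in Filter.atTop, v n < b + ε / 2 :=
    Filter.eventually_lt_of_limsup_lt (by
      rw [← hb]; exact ENNReal.lt_add_right hB.ne hε2.ne')
  refine Filter.limsup_le_of_le (by isBoundedDefault) ?_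
  filter_upwards [hu, hv] with n h1 h2
  calc u n + v n ≤ (a + ε / 2) + (b + ε / 2) := add_le_add h1.le h2.le
    _ = a + b + (ε / 2 + ε / 2) := by ring
    _ = a + b + ε := by rw [ENNReal.add_halves]

lemma tauSeq_union {X : Type*} (ξ : ℕ → FinAddOuterProb X) (A B : Set X) :
    tauSeq ξ (A ∪ B) ≤ tauSeq ξ A + tauSeq ξ B := by
  refine le_trans ?_ (limsup_add_le_atTop _ _)
  refine Filter.limsup_le_limsup (Filter.Eventually.of_forall fun n => ?_)
  dsimp only
  rw [← ENNReal.add_div, ← Finset.sum_add_distrib]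
  exact ENNReal.div_le_div_right
    (Finset.sum_le_sum fun j _ => (ξ j).subadd' A B) _

lemma tauSeq_biUnion {X : Type*} (ξ : ℕ → FinAddOuterProb X) (I : ℕ → Set X)
    (t : Finset ℕ) (ht : t.Nonempty) :
    tauSeq ξ (⋃ n ∈ t, I n) ≤ ∑ n ∈ t, tauSeq ξ (I n) := by
  classical
  induction ht using Finset.Nonempty.cons_induction with
  | singleton a => simp
  | cons a s ha hs ih =>
      rw [Finset.cons_eq_insert, Finset.set_biUnion_insert, Finset.sum_insert ha]
      exact le_trans (tauSeq_union ξ _ _) (add_le_add_right ih _)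

/-- Let `𝕏` be a compact metric space. If `η` is a probability measure (`η(𝕏) = 1`), then
`τ(K) ≤ η(K)` for every closed set `K ⊆ 𝕏`. -/
theorem tau_le_eta_on_closed
    {X : Type*} [MetricSpace X] [CompactSpace X] [MeasurableSpace X] [BorelSpace X]
    (ξ : ℕ → FinAddOuterProb X)
    (η : Measure X) (hη : ∀ E : Set X, MeasurableSet E → η E = nuSeq ξ E)
    (hprob : η Set.univ = 1) :
    ∀ K : Set X, IsClosed K → tauSeq ξ K ≤ η K := by
  intro K hK
  rw [hη K hK.measurableSet, nuSeq]
  refine le_trans ?_ (le_iSup₂ (1 : ℝ) one_pos)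
  refine le_iInf fun I => le_iInf fun hcov => le_iInf fun hopen => le_iInf fun _ => ?_
  obtain ⟨t, ht⟩ := (hK.isCompact).elim_finite_subcover I hopen hcov
  rcases t.eq_empty_or_nonempty with rfl | htne
  · simp only [Finset.notMem_empty, Set.iUnion_of_empty, Set.iUnion_empty,
      Set.subset_empty_iff] at ht
    subst ht
    exact le_trans (tauSeq_mono ξ (Set.empty_subset (I 0))) (ENNReal.le_tsum 0)
  calc tauSeq ξ K ≤ tauSeq ξ (⋃ n ∈ t, I n) := tauSeq_mono ξ ht
    _ ≤ ∑ n ∈ t, tauSeq ξ (I n) := tauSeq_biUnion ξ I t htne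
    _ ≤ ∑' n, tauSeq ξ (I n) := ENNReal.sum_le_tsum t
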